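/- The substitution ν1 generates the 1-dimensional paperfolding structures: for every n ≥ 0 and every integer x with −2^n ≤ x < 2^n, the letter at 0-based index x + 2^n of the word ν1^n(a11 a00) (a word of length 2^{n+1}) equals a_{ij}, where i = 0 if the crease of S(n+2) at position x is +1 and i = 1 if it is −1, and j = 0 if x is even, j = 1 if x is odd. -/

import Mathlib

/-- The 4-letter alphabet `A = {a00, a01, a10, a11}` of the 1-dimensional
paperfolding substitution. -/
inductive PFA
  | a00 | a01 | a10 | a11
deriving DecidableEq

open PFA

/-- The 1-dimensional paperfolding substitution:
`ν1(a00) = a00 a11`, `ν1(a01) = a00 a01`, `ν1(a10) = a10 a11`,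
`ν1(a11) = a10 a01`. -/
def nu1 : PFA → List PFA
  | a00 => [a00, a11]
  | a01 => [a00, a01]
  | a10 => [a10, a11]
  | a11 => [a10, a01]

/-- Extension of `ν1` to words by concatenation. -/
def nu1W (w : List PFA) : List PFA := (w.map nu1).flatten

/-- The iterate `ν1^k(α)`, a word of length `2^k`. -/
def nu1Iter : ℕ → PFA → List PFA
  | 0, α => [α]
  | k + 1, α => nu1W (nu1Iter k α)

/-- Reflection of a word of creases: reverse and negate every sign. -/
def rPF (w : List ℤ) : List ℤ := (w.map (fun s => -s)).reverse

/-- The 1-dimensional paperfolding patterns: `S(0) = []` and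
`S(n+1) = r(S(n)) ++ [+1] ++ S(n)`; `S(n)` has length `2^n − 1` and its entry
at 0-based index `m` is the crease sign at integer position
`x = m − 2^(n−1) + 1`. -/
def SPF : ℕ → List ℤ
  | 0 => []
  | n + 1 => rPF (SPF n) ++ [1] ++ SPF n

/-! ### Auxiliary lemmas -/

lemma rPF_length (w : List ℤ) : (rPF w).length = w.length := by simp [rPF]

lemma SPF_length (n : ℕ) : (SPF n).length = 2 ^ n - 1 := by
  induction n with
  | zero => rfl
  | succ n ih =>
    have h1 : 1 ≤ 2 ^ n := Nat.one_le_two_pow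
    have h2 : 2 ^ (n + 1) = 2 * 2 ^ n := by ring
    simp only [SPF, List.length_append, rPF_length, ih, List.length_singleton]
    omega

/-- Entry of `S(m+1)` at integer position `x`. -/
def cEnt (m : ℕ) (x : ℤ) : Option ℤ := (SPF (m + 1))[(x + 2 ^ m - 1).toNat]?

lemma SPF_succ (m : ℕ) : SPF (m + 1) = (rPF (SPF m) ++ [1]) ++ SPF m := rfl

lemma cast_pow (m : ℕ) : ((2 ^ m : ℕ) : ℤ) = 2 ^ m := by push_cast; ring

lemma cEnt_zero (m : ℕ) : cEnt m 0 = some 1 := by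
  rcases m with _ | m
  · rfl
  · unfold cEnt
    have hn1 : (2 : ℕ) ^ (m + 1) = 2 * 2 ^ m := by ring
    have hone : 1 ≤ (2 : ℕ) ^ m := Nat.one_le_two_pow
    have hidx : ((0 : ℤ) + 2 ^ (m + 1) - 1).toNat = 2 ^ (m + 1) - 1 := by
      simp only [← cast_pow]; omega
    rw [hidx, SPF_succ, List.getElem?_append, if_pos (by
        simp only [List.length_append, rPF_length, SPF_length,
          List.length_singleton]; omega),
      List.getElem?_append_right (by rw [rPF_length, SPF_length]),
      rPF_length, SPF_length, Nat.sub_self]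
    rfl

lemma cEnt_pos (m : ℕ) (x : ℤ) (h1 : 0 < x) (h2 : x < 2 ^ (m + 1)) :
    cEnt (m + 1) x = cEnt m (x - 2 ^ m) := by
  unfold cEnt
  have hn1 : (2 : ℕ) ^ (m + 1) = 2 * 2 ^ m := by ring
  have hone : 1 ≤ (2 : ℕ) ^ m := Nat.one_le_two_pow
  simp only [← cast_pow] at h1 h2 ⊢
  rw [SPF_succ (m + 1), List.getElem?_append_right (by
      simp only [List.length_append, rPF_length, SPF_length,
        List.length_singleton]; omega)]
  simp only [List.length_append, rPF_length, SPF_length, List.length_singleton]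
  congr 1
  omega

lemma cEnt_neg (m : ℕ) (x : ℤ) (h1 : -(2 ^ (m + 1)) < x) (h2 : x < 0) :
    cEnt (m + 1) x = (cEnt m (-(x + 2 ^ m))).map (fun s => -s) := by
  unfold cEnt
  have hn1 : (2 : ℕ) ^ (m + 1) = 2 * 2 ^ m := by ring
  have hone : 1 ≤ (2 : ℕ) ^ m := Nat.one_le_two_pow
  simp only [← cast_pow] at h1 h2 ⊢
  have hmaplen : ((SPF (m + 1)).map (fun s => -s)).length = 2 ^ (m + 1) - 1 := by
    rw [List.length_map, SPF_length]
  rw [SPF_succ (m + 1), List.getElem?_append, if_pos (by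
      simp only [List.length_append, rPF_length, SPF_length,
        List.length_singleton]; omega),
    List.getElem?_append, if_pos (by rw [rPF_length, SPF_length]; omega)]
  unfold rPF
  rw [List.getElem?_reverse (by rw [hmaplen]; omega), List.getElem?_map, hmaplen]
  congr 2
  omega

lemma claimA : ∀ (m : ℕ) (x : ℤ), -(2 ^ m) < x → x < 2 ^ m →
    cEnt (m + 1) (2 * x) = cEnt m x := by
  intro m
  induction m with
  | zero =>
    intro x h1 h2
    have hx : x = 0 := by simp only [pow_zero] at h1 h2; omega
    subst hx
    rw [mul_zero, cEnt_zero, cEnt_zero]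
  | succ m ih =>
    intro x h1 h2
    have hp1 : (2 : ℤ) ^ (m + 1) = 2 * 2 ^ m := by ring
    have hp2 : (2 : ℤ) ^ (m + 2) = 2 * 2 ^ (m + 1) := by ring
    have hq : (2 : ℤ) ^ (m + 1 + 1) = 2 * 2 ^ (m + 1) := by ring
    rcases lt_trichotomy x 0 with hx | hx | hx
    · rw [cEnt_neg (m + 1) (2 * x) (by omega) (by omega),
        cEnt_neg m x (by omega) hx,
        show -(2 * x + 2 ^ (m + 1)) = 2 * (-(x + 2 ^ m)) by ring,
        ih _ (by omega) (by omega)]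
    · subst hx
      rw [mul_zero, cEnt_zero, cEnt_zero]
    · rw [cEnt_pos (m + 1) (2 * x) (by omega) (by omega),
        cEnt_pos m x hx (by omega),
        show 2 * x - 2 ^ (m + 1) = 2 * (x - 2 ^ m) by ring,
        ih _ (by omega) (by omega)]

lemma claimB : ∀ (m : ℕ) (x : ℤ), -(2 ^ (m + 1)) ≤ x → x < 2 ^ (m + 1) →
    cEnt (m + 2) (2 * x + 1) = some (if Even x then -1 else 1) := by
  intro m
  induction m with
  | zero =>
    intro x h1 h2
    have h : (2 : ℤ) ^ (0 + 1) = 2 := by norm_num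
    rw [h] at h1 h2
    have h1' : (-2 : ℤ) ≤ x := by omega
    interval_cases x <;> decide
  | succ m ih =>
    intro x h1 h2
    have hp1 : (2 : ℤ) ^ (m + 1) = 2 * 2 ^ m := by ring
    have hp2 : (2 : ℤ) ^ (m + 2) = 2 * 2 ^ (m + 1) := by ring
    have hp3 : (2 : ℤ) ^ (m + 3) = 2 * 2 ^ (m + 2) := by ring
    have hq : (2 : ℤ) ^ (m + 1 + 1) = 2 * 2 ^ (m + 1) := by ring
    rcases le_or_gt 0 x with hx | hx
    · rw [show (m + 1 + 2) = (m + 2) + 1 by ring,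
        cEnt_pos (m + 2) (2 * x + 1) (by omega) (by omega),
        show 2 * x + 1 - 2 ^ (m + 2) = 2 * (x - 2 ^ (m + 1)) + 1 by ring,
        ih _ (by omega) (by omega)]
      have h4 : Even (x - 2 ^ (m + 1)) ↔ Even x := by
        simp [Int.even_iff] at *; omega
      rw [if_congr h4 rfl rfl]
    · rw [show (m + 1 + 2) = (m + 2) + 1 by ring,
        cEnt_neg (m + 2) (2 * x + 1) (by omega) (by omega),
        show -(2 * x + 1 + 2 ^ (m + 2)) = 2 * (-x - 2 ^ (m + 1) - 1) + 1 by ring,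
        ih _ (by omega) (by omega)]
      have h4 : Even (-x - 2 ^ (m + 1) - 1) ↔ ¬ Even x := by
        rw [Int.even_iff, Int.even_iff, hp1]; omega
      by_cases hE : Even x <;> simp [h4, hE]

/-! ### Substitution side -/

def pfFst : PFA → PFA
  | a00 => a00 | a01 => a00 | a10 => a10 | a11 => a10

def pfSnd : PFA → PFA
  | a00 => a11 | a01 => a01 | a10 => a11 | a11 => a01

lemma nu1W_cons (a : PFA) (w : List PFA) : nu1W (a :: w) = nu1 a ++ nu1W w := by
  simp [nu1W]

lemma nu1W_append (u v : List PFA) : nu1W (u ++ v) = nu1W u ++ nu1W v := by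
  simp [nu1W]

lemma nu1_length (a : PFA) : (nu1 a).length = 2 := by cases a <;> rfl

lemma nu1W_get_even (w : List PFA) (i : ℕ) :
    (nu1W w)[2 * i]? = (w[i]?).map pfFst := by
  induction w generalizing i with
  | nil => simp [nu1W]
  | cons a w ih =>
    rw [nu1W_cons]
    cases i with
    | zero => cases a <;> simp [nu1, pfFst]
    | succ i =>
      rw [List.getElem?_append_right (by rw [nu1_length]; omega), nu1_length,
        show 2 * (i + 1) - 2 = 2 * i from by omega, ih]
      simp

lemma nu1W_get_odd (w : List PFA) (i : ℕ) :
    (nu1W w)[2 * i + 1]? = (w[i]?).map pfSnd := by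
  induction w generalizing i with
  | nil => simp [nu1W]
  | cons a w ih =>
    rw [nu1W_cons]
    cases i with
    | zero => cases a <;> simp [nu1, pfSnd]
    | succ i =>
      rw [List.getElem?_append_right (by rw [nu1_length]; omega), nu1_length,
        show 2 * (i + 1) + 1 - 2 = 2 * i + 1 from by omega, ih]
      simp

/-- `ν1` generates the 1-dimensional paperfolding structures: for `n ≥ 0` and
`−2^n ≤ x < 2^n`, the letter at index `x + 2^n` of `ν1^n(a11 a00)` is
`a_{ij}` where `i` is determined by the crease `s` of `S(n+2)` at position `x`
(`i = 0` if `s = +1`, `i = 1` if `s = −1`) and `j` by the parity of `x`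
(`j = 0` if `x` is even, `j = 1` if `x` is odd). -/
theorem stmt11 (n : ℕ) (x : ℤ) (h1 : -(2 ^ n) ≤ x) (h2 : x < 2 ^ n) :
    ∃ s : ℤ, (s = 1 ∨ s = -1) ∧
      (SPF (n + 2))[(x + 2 ^ (n + 1) - 1).toNat]? = some s ∧
      (nu1Iter n PFA.a11 ++ nu1Iter n PFA.a00)[(x + 2 ^ n).toNat]? =
        some (if s = 1 then (if Even x then PFA.a00 else PFA.a01)
              else (if Even x then PFA.a10 else PFA.a11)) := by
  induction n generalizing x with
  | zero =>
    norm_num at h1 h2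
    interval_cases x
    · exact ⟨-1, Or.inr rfl, by decide, by decide⟩
    · exact ⟨1, Or.inl rfl, by decide, by decide⟩
  | succ n ih =>
    have hp0 : (2 : ℤ) ^ (n + 1) = 2 * 2 ^ n := by ring
    have hp1 : (2 : ℤ) ^ (n + 2) = 2 * 2 ^ (n + 1) := by ring
    have hq : (2 : ℤ) ^ (n + 1 + 1) = 2 * 2 ^ (n + 1) := by ring
    rcases Int.even_or_odd x with ⟨y, hy⟩ | ⟨y, hy⟩
    · -- x = 2 * y
      obtain ⟨s, hs, hS, hT⟩ := ih y (by omega) (by omega)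
      refine ⟨s, hs, ?_, ?_⟩
      · show cEnt (n + 2) x = some s
        rw [show x = 2 * y by omega, claimA (n + 1) y (by omega) (by omega)]
        exact hS
      · show (nu1W (nu1Iter n a11) ++ nu1W (nu1Iter n a00))[(x + 2 ^ (n + 1)).toNat]?
            = _
        rw [← nu1W_append]
        have hnn : ((y + 2 ^ n).toNat : ℤ) = y + 2 ^ n :=
          Int.toNat_of_nonneg (by omega)
        rw [show (x + 2 ^ (n + 1)).toNat = 2 * ((y + 2 ^ n).toNat) from by omega,
          nu1W_get_even, hT]
        have hEx : Even x := ⟨y, hy⟩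
        rcases hs with rfl | rfl <;> by_cases hY : Even y <;>
          simp [pfFst, hY, hEx]
    · -- x = 2 * y + 1
      obtain ⟨s, hs, hS, hT⟩ := ih y (by omega) (by omega)
      have hOx : ¬ Even x := by simp [Int.even_iff]; omega
      refine ⟨if Even y then -1 else 1,
        by by_cases h : Even y <;> simp [h], ?_, ?_⟩
      · show cEnt (n + 2) x = _
        rw [show x = 2 * y + 1 from hy]
        exact claimB n y (by omega) (by omega)
      · show (nu1W (nu1Iter n a11) ++ nu1W (nu1Iter n a00))[(x + 2 ^ (n + 1)).toNat]?
            = _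
        rw [← nu1W_append]
        have hnn : ((y + 2 ^ n).toNat : ℤ) = y + 2 ^ n :=
          Int.toNat_of_nonneg (by omega)
        rw [show (x + 2 ^ (n + 1)).toNat = 2 * ((y + 2 ^ n).toNat) + 1 from by omega,
          nu1W_get_odd, hT]
        rcases hs with rfl | rfl <;> by_cases hY : Even y <;>
          simp [pfSnd, hY, hOx]
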